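/- Let V be a vector space over ℂ, let η, r be real numbers with 0 < η < 1 and e^{2r} ≤ 1/η, set G = e^{−r}/√η (so G ≥ 1 and G e^{r} √η = 1), and let z ∈ ℂ with e^{2r} + z ≠ 0. Suppose p_out⁻, p_s, p_out⁺, p_out, p_in, p₀, p_G ∈ V satisfy: p_out⁻ = e^{−r}·p_s; p_s = G·p_in − √(G²−1)·p_G; p_out⁺ = −√η·p_out⁻ + √(1−η)·p₀; p_out = √(1−η)·p_out⁻ + √η·p₀; and p_in = z·p_out⁺. Then p_out = ((z/√η + e^{2r}√η)/(e^{2r} + z))·p₀ − ((√(1/η − e^{2r})·√(1−η))/(e^{2r} + z))·p_G. -/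

import Mathlib

/-- Phase-quadrature loop equations of a feedback oscillator with a phase-sensitive
in-loop amplifier (gain–loss balance `G e^r √η = 1`): the output phase quadrature is
`H₀ᵖ • p₀ − H_Gᵖ • p_G` with `H₀ᵖ = (z/√η + e^{2r}√η)/(e^{2r} + z)` and
`H_Gᵖ = √(1/η − e^{2r})√(1−η)/(e^{2r} + z)`. -/
theorem stmt_16 (V : Type*) [AddCommGroup V] [Module ℂ V]
    (η r : ℝ) (hη0 : 0 < η) (hη1 : η < 1) (hr : Real.exp (2 * r) ≤ 1 / η)
    (G : ℝ) (hGdef : G = Real.exp (-r) / Real.sqrt η)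
    (z : ℂ) (hz : ((Real.exp (2 * r) : ℝ) : ℂ) + z ≠ 0)
    (poutm ps poutp pout pin p₀ pG : V)
    (h1 : poutm = ((Real.exp (-r) : ℝ) : ℂ) • ps)
    (h2 : ps = (G : ℂ) • pin - ((Real.sqrt (G ^ 2 - 1) : ℝ) : ℂ) • pG)
    (h3 : poutp = -((Real.sqrt η : ℝ) : ℂ) • poutm + ((Real.sqrt (1 - η) : ℝ) : ℂ) • p₀)
    (h4 : pout = ((Real.sqrt (1 - η) : ℝ) : ℂ) • poutm + ((Real.sqrt η : ℝ) : ℂ) • p₀)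
    (h5 : pin = z • poutp) :
    pout = ((z / (Real.sqrt η : ℂ) + ((Real.exp (2 * r) : ℝ) : ℂ) * (Real.sqrt η : ℂ))
        / (((Real.exp (2 * r) : ℝ) : ℂ) + z)) • p₀
      - ((((Real.sqrt (1 / η - Real.exp (2 * r)) : ℝ) : ℂ)
          * ((Real.sqrt (1 - η) : ℝ) : ℂ))
        / (((Real.exp (2 * r) : ℝ) : ℂ) + z)) • pG := by
  set a : ℝ := Real.exp (-r) with ha
  set E : ℝ := Real.exp (2 * r) with hE
  set s : ℝ := Real.sqrt η with hsdef
  set t : ℝ := Real.sqrt (1 - η) with htdef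
  set c : ℝ := Real.sqrt (G ^ 2 - 1) with hcdef
  set q : ℝ := Real.sqrt (1 / η - E) with hqdef
  have hs0 : 0 < s := Real.sqrt_pos.mpr hη0
  have hs2 : s ^ 2 = η := Real.sq_sqrt hη0.le
  have ht2 : t ^ 2 = 1 - η := Real.sq_sqrt (by linarith)
  have hE0 : 0 < E := Real.exp_pos _
  have ha0 : 0 < a := Real.exp_pos _
  -- E * a * a = 1
  have hEaa : E * a * a = 1 := by
    have harg : 2 * r + -r + -r = 0 := by ring
    rw [ha, hE, ← Real.exp_add, ← Real.exp_add, harg, Real.exp_zero]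
  -- G relation
  have hGs : G * s = a := by rw [hGdef]; field_simp
  -- c1 : E * a * G * s = 1
  have c1 : E * (a * G * s) = 1 := by linear_combination (E * a) * hGs + hEaa
  -- q identity: E * a * c = q
  have c2 : E * a * c = q := by
    have hEa : E * a = Real.exp r := by
      rw [ha, hE, ← Real.exp_add]; ring_nf
    have hG2 : G ^ 2 - 1 = a ^ 2 / η - 1 := by
      rw [hGdef]; field_simp
      rw [Real.sq_sqrt hη0.le]; ring
    rw [hcdef, hqdef, hG2, hEa]
    rw [← Real.sqrt_sq (Real.exp_nonneg r), ← Real.sqrt_mul (sq_nonneg _)]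
    congr 1
    have hrE : Real.exp r ^ 2 = E := by
      rw [pow_two, ← Real.exp_add, hE, two_mul]
    have haE : a ^ 2 * E = 1 := by
      have harg : -r + -r + 2 * r = 0 := by ring
      rw [ha, hE, pow_two, ← Real.exp_add, ← Real.exp_add, harg, Real.exp_zero]
    rw [hrE]
    field_simp
    linear_combination haE
  -- fixed point equation
  have hfix : poutm = (-((a : ℂ) * G * z * s)) • poutm + ((a : ℂ) * G * t * z) • p₀
      - ((a : ℂ) * c) • pG := by
    conv_lhs => rw [h1, h2, h5, h3]
    module
  have h6 : ((1 : ℂ) + ((a : ℂ) * G * s) * z) • poutm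
      = (((a : ℂ) * G * t) * z) • p₀ - ((a : ℂ) * c) • pG := by
    linear_combination (norm := module) hfix
  have hEz : ((E : ℂ)) ≠ 0 := by exact_mod_cast hE0.ne'
  have hw : ((1 : ℂ) + ((a : ℂ) * G * s) * z) ≠ 0 := by
    intro h
    apply hz
    have hc1 : ((E : ℂ)) * ((a : ℂ) * G * s) = 1 := by exact_mod_cast c1
    have := congrArg (fun w => ((E : ℂ)) * w) h
    simp only [mul_add, mul_one, mul_zero] at this
    rw [← mul_assoc, hc1, one_mul] at this
    exact this
  have hpoutm : poutm = (((1 : ℂ) + ((a : ℂ) * G * s) * z)⁻¹ * (((a : ℂ) * G * t) * z)) • p₀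
      - (((1 : ℂ) + ((a : ℂ) * G * s) * z)⁻¹ * ((a : ℂ) * c)) • pG := by
    have h7 := congrArg (fun v => (((1 : ℂ) + ((a : ℂ) * G * s) * z)⁻¹) • v) h6
    simp only [smul_smul, smul_sub] at h7
    rw [inv_mul_cancel₀ hw, one_smul] at h7
    exact h7
  rw [h4, hpoutm]
  have hc1 : ((E : ℂ)) * ((a : ℂ) * G * s) = 1 := by exact_mod_cast c1
  have hc2 : ((E : ℂ)) * (a : ℂ) * (c : ℂ) = (q : ℂ) := by exact_mod_cast c2
  have hc4 : ((t : ℂ)) ^ 2 + ((s : ℂ)) ^ 2 = 1 := by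
    have : t ^ 2 + s ^ 2 = 1 := by rw [hs2, ht2]; ring
    exact_mod_cast this
  have hsC : ((s : ℂ)) ≠ 0 := by exact_mod_cast hs0.ne'
  match_scalars
  · field_simp
    ring_nf
    linear_combination ((t : ℂ) ^ 2 * z) * hc1 + ((a : ℂ) * G * z ^ 2 * s + z) * hc4
  · field_simp
    ring_nf
    linear_combination (-((t : ℂ) + (t : ℂ) * a * z * G * s)) * hc2 + ((t : ℂ) * a * z * c) * hc1
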